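/- Let k > r ≥ 2 be integers. If j_{k,r} = 1 (that is, gcd(k, #r) > 1 and gcd(k−1, #r) = 1), then w_2(k;r) = rk − r + 1. -/

import Mathlib

/-- `vdwProp r k n` says: every coloring `χ` of `{1,...,n}` with colors `0,...,r-1`
admits, for some color `i < r`, a `k i`-term arithmetic progression
`a, a+d, ..., a+(k i - 1)d` (with `a ≥ 1`, `d ≥ 1`) contained in `{1,...,n}`,
all of whose elements have color `i`. -/
def vdwProp (r : ℕ) (k : ℕ → ℕ) (n : ℕ) : Prop :=
  ∀ χ : ℕ → ℕ, (∀ x, 1 ≤ x → x ≤ n → χ x < r) →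
    ∃ i < r, ∃ a, 1 ≤ a ∧ ∃ d, 1 ≤ d ∧ a + (k i - 1) * d ≤ n ∧
      ∀ t < k i, χ (a + t * d) = i

/-- The length function for `w₂(k;r) = w(k,2,2,...,2;r)`: color `0` must avoid
`k`-term APs, every other color must avoid `2`-term APs. -/
def twoColors (k : ℕ) : ℕ → ℕ := fun i => if i = 0 then k else 2

/-- `#r`: the product of all primes not exceeding `r`. -/
def primorialUpTo (r : ℕ) : ℕ := ∏ p ∈ Finset.filter Nat.Prime (Finset.range (r + 1)), p

/-- `j_{k,r} = min { j ≥ 0 : gcd(k - j, #r) = 1 }`. -/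
noncomputable def jkr (k r : ℕ) : ℕ := sInf {j : ℕ | Nat.gcd (k - j) (primorialUpTo r) = 1}

/-- `ℓ_{k,r} = min { ℓ ≥ 0 : gcd(k - ℓ, #r) = r }`. -/
noncomputable def lkr (k r : ℕ) : ℕ := sInf {l : ℕ | Nat.gcd (k - l) (primorialUpTo r) = r}

lemma prime_dvd_primorial {q r : ℕ} (hq : q.Prime) (hqr : q ≤ r) :
    q ∣ primorialUpTo r := by
  apply Finset.dvd_prod_of_mem
  simp only [Finset.mem_filter, Finset.mem_range]
  exact ⟨by omega, hq⟩

lemma cop_of_gcd_one {k r : ℕ} (hr : 2 ≤ r) (hk : r < k)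
    (h1 : Nat.gcd (k - 1) (primorialUpTo r) = 1) :
    ∀ d, 1 ≤ d → d ≤ r → Nat.gcd d (k - 1) = 1 := by
  intro d hd1 hdr
  by_contra h
  have hqp : Nat.Prime (Nat.gcd d (k - 1)).minFac := Nat.minFac_prime h
  have hqd : (Nat.gcd d (k - 1)).minFac ∣ d :=
    (Nat.minFac_dvd _).trans (Nat.gcd_dvd_left _ _)
  have hqk : (Nat.gcd d (k - 1)).minFac ∣ (k - 1) :=
    (Nat.minFac_dvd _).trans (Nat.gcd_dvd_right _ _)
  have hqr : (Nat.gcd d (k - 1)).minFac ≤ r :=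
    le_trans (Nat.le_of_dvd (by omega) hqd) hdr
  have hdvd : (Nat.gcd d (k - 1)).minFac ∣ Nat.gcd (k - 1) (primorialUpTo r) :=
    Nat.dvd_gcd hqk (prime_dvd_primorial hqp hqr)
  rw [h1] at hdvd
  have := Nat.le_of_dvd one_pos hdvd
  have := hqp.two_le
  omega

lemma k_even_of_gcd_one {k r : ℕ} (hr : 2 ≤ r) (hk : r < k)
    (h1 : Nat.gcd (k - 1) (primorialUpTo r) = 1) : k % 2 = 0 := by
  by_contra h
  have h2 : (2 : ℕ) ∣ (k - 1) := by omega
  have hdvd : (2 : ℕ) ∣ Nat.gcd (k - 1) (primorialUpTo r) :=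
    Nat.dvd_gcd h2 (prime_dvd_primorial Nat.prime_two hr)
  rw [h1] at hdvd
  omega

/-- Lower bound: no valid coloring witness below `r*k - r + 1`. -/
lemma lower_bound (k r : ℕ) (hr : 2 ≤ r) (hk : r < k)
    (hcop : ∀ d, 1 ≤ d → d ≤ r → Nat.gcd d (k - 1) = 1)
    (n : ℕ) (hn : n ≤ r * k - r) : ¬ vdwProp r (twoColors k) n := by
  intro hvdw
  have hK : 2 ≤ k - 1 := by omega
  set χ : ℕ → ℕ := fun x => if (k - 1) ∣ x ∧ x < r * (k - 1) ∧ 1 ≤ x then x / (k - 1) else 0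
    with hχdef
  have hrk : r ≤ r * k := Nat.le_mul_of_pos_right r (by omega)
  have hrKk : r * (k - 1) + r = r * k := by
    rw [Nat.mul_sub_one]
    have : k ≤ r * k := Nat.le_mul_of_pos_left k (by omega)
    omega
  have hnrK : n ≤ r * (k - 1) := by omega
  have hχlt : ∀ x, 1 ≤ x → x ≤ n → χ x < r := by
    intro x hx1 hxn
    simp only [hχdef]
    split
    · rename_i hcond
      rw [Nat.div_lt_iff_lt_mul (by omega)]
      have := hcond.2.1
      have hco : r * (k - 1) = (k - 1) * r := Nat.mul_comm _ _
      omega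
    · omega
  have hχval : ∀ x i, χ x = i → i ≠ 0 → x = i * (k - 1) := by
    intro x i hx hi
    simp only [hχdef] at hx
    split at hx
    · rename_i hcond
      have h2 := Nat.eq_mul_of_div_eq_right hcond.1 hx
      rw [h2, Nat.mul_comm]
    · omega
  obtain ⟨i, hir, a, ha, d, hd, hle, hmono⟩ := hvdw χ hχlt
  by_cases hi0 : i = 0
  · -- color 0 : k-AP, find a multiple of (k-1) inside
    subst hi0
    have hle' : a + (k - 1) * d ≤ n := by simpa [twoColors] using hle
    have hmono' : ∀ t < k, χ (a + t * d) = 0 := by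
      intro t ht
      have := hmono t (by simpa [twoColors] using ht)
      simpa using this
    clear hle hmono
    have hdr : d < r := by
      by_contra hdge
      have h1 : (k - 1) * r ≤ (k - 1) * d := Nat.mul_le_mul_left (k - 1) (by omega)
      have h2 : (k - 1) * r = r * (k - 1) := Nat.mul_comm _ _
      omega
    have hcopd : Nat.Coprime d (k - 1) := hcop d hd (by omega)
    obtain ⟨u, -, hu⟩ := Nat.exists_mul_mod_eq_one_of_coprime hcopd (by omega)
    set t := ((k - 1) - a % (k - 1)) * u % (k - 1) with htdef
    have htK : t < k - 1 := Nat.mod_lt _ (by omega)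
    have hdvd : (k - 1) ∣ a + t * d := by
      have h1 : t ≡ ((k - 1) - a % (k - 1)) * u [MOD (k - 1)] := Nat.mod_modEq _ _
      have h5 : a + t * d ≡ a + ((k - 1) - a % (k - 1)) * 1 [MOD (k - 1)] := by
        apply Nat.ModEq.add_left
        calc t * d ≡ ((k - 1) - a % (k - 1)) * u * d [MOD (k - 1)] := h1.mul_right d
          _ = ((k - 1) - a % (k - 1)) * (d * u) := by ring
          _ ≡ ((k - 1) - a % (k - 1)) * 1 [MOD (k - 1)] := by
              apply Nat.ModEq.mul_left
              calc d * u ≡ d * u % (k - 1) [MOD (k - 1)] := (Nat.mod_modEq _ _).symm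
                _ = 1 := hu
      have h6 : a + ((k - 1) - a % (k - 1)) * 1 = (k - 1) * (a / (k - 1)) + (k - 1) := by
        have h7 : (k - 1) * (a / (k - 1)) + a % (k - 1) = a := Nat.div_add_mod a (k - 1)
        have h8 : a % (k - 1) < k - 1 := Nat.mod_lt _ (by omega)
        omega
      have h9 : a + t * d ≡ 0 [MOD (k - 1)] := by
        calc a + t * d ≡ a + ((k - 1) - a % (k - 1)) * 1 [MOD (k - 1)] := h5
          _ = (k - 1) * (a / (k - 1)) + (k - 1) := h6
          _ ≡ 0 [MOD (k - 1)] := (Nat.modEq_zero_iff_dvd).2 ⟨a / (k - 1) + 1, by ring⟩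
      exact (Nat.modEq_zero_iff_dvd).1 h9
    have htk : t < k := by omega
    have hx0 : χ (a + t * d) = 0 := hmono' t htk
    have hxK : k - 1 ≤ a + t * d := Nat.le_of_dvd (by omega) hdvd
    have hxlt : a + t * d < r * (k - 1) := by
      have h1 : t * d ≤ (k - 2) * d := Nat.mul_le_mul_right d (by omega)
      have h2 : (k - 2) * d + d = (k - 1) * d := by
        have h3 : k - 2 + 1 = k - 1 := by omega
        calc (k - 2) * d + d = (k - 2 + 1) * d := by ring
          _ = (k - 1) * d := by rw [h3]
      omega
    simp only [hχdef] at hx0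
    rw [if_pos ⟨hdvd, hxlt, by omega⟩] at hx0
    have h10 : 1 ≤ (a + t * d) / (k - 1) := (Nat.one_le_div_iff (by omega)).2 hxK
    omega
  · -- color i ≠ 0 : two points both equal to i*(k-1)
    have h2 : twoColors k i = 2 := by simp [twoColors, hi0]
    rw [h2] at hle hmono
    have hA := hmono 0 (by omega)
    have hB := hmono 1 (by omega)
    simp only [Nat.zero_mul, Nat.add_zero, Nat.one_mul] at hA hB
    have hxa := hχval a i hA hi0
    have hxb := hχval (a + d) i hB hi0
    omega

/-- Upper bound core. -/
lemma upper_bound (k r : ℕ) (hr : 2 ≤ r) (hk : r < k) (hk2 : k % 2 = 0)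
    (hcopr : Nat.gcd r (k - 1) = 1) :
    vdwProp r (twoColors k) (r * k - r + 1) := by
  intro χ hχ
  by_contra hcon
  push_neg at hcon
  set N := r * k - r + 1 with hNdef
  have hrk : r ≤ r * k := Nat.le_mul_of_pos_right r (by omega)
  have hNr : N + r = r * k + 1 := by omega
  have hmul : ∀ a b : ℕ, a ≤ b → a * k ≤ b * k := fun a b h => Nat.mul_le_mul_right k h
  have hsub1 : ∀ i : ℕ, 1 ≤ i → (i - 1) * k + k = i * k := by
    intro i hi
    rw [Nat.sub_one_mul]
    have := Nat.le_mul_of_pos_left k (show 0 < i by omega)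
    omega
  have H0 : ∀ a d, 1 ≤ a → 1 ≤ d → a + (k - 1) * d ≤ N → ∃ t < k, χ (a + t * d) ≠ 0 := by
    intro a d ha hd hle
    have h := hcon 0 (by omega) a ha d hd (by simpa [twoColors] using hle)
    simpa [twoColors] using h
  have H1 : ∀ x y, 1 ≤ x → x < y → y ≤ N → χ x ≠ 0 → χ x ≠ χ y := by
    intro x y hx hxy hy h0 heq
    have hxr : χ x < r := hχ x hx (by omega)
    have h := hcon (χ x) hxr x hx (y - x) (by omega)
      (by simp only [twoColors, if_neg h0]; omega)
    obtain ⟨t, ht, hne⟩ := h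
    have ht2 : twoColors k (χ x) = 2 := by simp [twoColors, h0]
    rw [ht2] at ht
    interval_cases t
    · simp at hne
    · apply hne
      have : x + 1 * (y - x) = y := by omega
      rw [this, ← heq]
  have hwin : ∀ i, 1 ≤ i → i ≤ r - 1 → ∃ x, (i - 1) * k + 1 ≤ x ∧ x ≤ i * k ∧ χ x ≠ 0 := by
    intro i h1 h2
    have hik : i * k ≤ N := by
      have h3 : i * k ≤ (r - 1) * k := hmul _ _ (by omega)
      have h4 : (r - 1) * k + k = r * k := hsub1 r (by omega)
      omega
    have hle : (i - 1) * k + 1 + (k - 1) * 1 ≤ N := by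
      have := hsub1 i h1; omega
    obtain ⟨t, ht, hne⟩ := H0 ((i - 1) * k + 1) 1 (by omega) (by omega) hle
    refine ⟨(i - 1) * k + 1 + t * 1, by omega, ?_, hne⟩
    have h5 : t * 1 ≤ k - 1 := by omega
    have := hsub1 i h1
    omega
  choose! bfun hb1 hb2 hb3 using hwin
  have hblt : ∀ i j, 1 ≤ i → j ≤ r - 1 → i < j → bfun i < bfun j := by
    intro i j hi hj hij
    have h1 : bfun i ≤ i * k := hb2 i hi (by omega)
    have h2 : (j - 1) * k + 1 ≤ bfun j := hb1 j (by omega) hj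
    have h3 : i * k ≤ (j - 1) * k := hmul _ _ (by omega)
    omega
  have hbN : ∀ i, 1 ≤ i → i ≤ r - 1 → 1 ≤ bfun i ∧ bfun i ≤ N := by
    intro i h1 h2
    have ha := hb1 i h1 h2
    have hb := hb2 i h1 h2
    have h3 : i * k ≤ (r - 1) * k := hmul _ _ (by omega)
    have h4 : (r - 1) * k + k = r * k := hsub1 r (by omega)
    omega
  have hcover : ∀ x, 1 ≤ x → x ≤ N → χ x ≠ 0 → ∃ j, 1 ≤ j ∧ j ≤ r - 1 ∧ bfun j = x := by
    intro x hx1 hxN hx0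
    have hsurj := Finset.surj_on_of_inj_on_of_card_le (s := Finset.Icc 1 (r - 1))
      (t := Finset.Icc 1 (r - 1)) (fun i _ => χ (bfun i))
      (fun i hi => by
        rw [Finset.mem_Icc] at hi ⊢
        have h0 := hb3 i hi.1 hi.2
        have hN := hbN i hi.1 hi.2
        have := hχ (bfun i) hN.1 hN.2
        omega)
      (fun i j hi hj heq => by
        rw [Finset.mem_Icc] at hi hj
        by_contra hne
        rcases Nat.lt_or_ge i j with h | h
        · have hlt := hblt i j hi.1 hj.2 h
          have hN := hbN j hj.1 hj.2
          exact H1 (bfun i) (bfun j) (hbN i hi.1 hi.2).1 hlt hN.2 (hb3 i hi.1 hi.2) heq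
        · have hij : j < i := by omega
          have hlt := hblt j i hj.1 hi.2 hij
          have hN := hbN i hi.1 hi.2
          exact H1 (bfun j) (bfun i) (hbN j hj.1 hj.2).1 hlt hN.2 (hb3 j hj.1 hj.2) heq.symm)
      le_rfl
    have hcx : χ x ∈ Finset.Icc 1 (r - 1) := by
      rw [Finset.mem_Icc]
      have := hχ x hx1 hxN
      omega
    obtain ⟨j, hj, hje⟩ := hsurj (χ x) hcx
    rw [Finset.mem_Icc] at hj
    refine ⟨j, hj.1, hj.2, ?_⟩
    by_contra hne
    rcases Nat.lt_or_ge (bfun j) x with h | h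
    · exact H1 (bfun j) x (hbN j hj.1 hj.2).1 h hxN (hb3 j hj.1 hj.2) hje.symm
    · have hlt : x < bfun j := by omega
      exact H1 x (bfun j) hx1 hlt (hbN j hj.1 hj.2).2 hx0 hje
  have hhit : ∀ a d, 1 ≤ a → 1 ≤ d → a + (k - 1) * d ≤ N →
      ∃ j t, 1 ≤ j ∧ j ≤ r - 1 ∧ t < k ∧ bfun j = a + t * d := by
    intro a d ha hd hle
    obtain ⟨t, ht, hne⟩ := H0 a d ha hd hle
    have h1 : t * d ≤ (k - 1) * d := Nat.mul_le_mul_right d (by omega)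
    obtain ⟨j, hj1, hj2, hj3⟩ := hcover (a + t * d) (by omega) (by omega) hne
    exact ⟨j, t, hj1, hj2, ht, hj3⟩
  -- P2 : downward refinement  i*k ≤ bfun i + (r - 2)
  have P2 : ∀ s i, 1 ≤ i → i ≤ r - 1 → i + s = r - 1 → i * k ≤ bfun i + (r - 2) := by
    intro s
    induction s with
    | zero =>
      intro i h1 h2 h3
      have h4 : 2 * k ≤ r * k := hmul 2 r hr
      obtain ⟨a, ha⟩ : ∃ a, a + k = N + 1 := ⟨N + 1 - k, by omega⟩
      have ha1 : 1 ≤ a := by omega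
      have ha2 : a + (k - 1) * 1 ≤ N := by omega
      obtain ⟨j, t, hj1, hj2, ht, hbj⟩ := hhit a 1 ha1 (by omega) ha2
      have hjk : bfun j ≤ j * k := hb2 j hj1 hj2
      have hj5 : j * k ≤ (r - 1) * k := hmul _ _ hj2
      have hr1 : (r - 1) * k + k = r * k := hsub1 r (by omega)
      have hji : j = i := by
        by_contra hne
        have h7 : j * k ≤ (r - 2) * k := hmul _ _ (by omega)
        have h8 := hsub1 (r - 1) (by omega)
        have h9 : r - 1 - 1 = r - 2 := by omega
        rw [h9] at h8
        omega
      rw [hji] at hbj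
      have hik1 : i * k ≤ (r - 1) * k := hmul _ _ (by omega)
      have hik2 : (r - 1) * k ≤ i * k := hmul _ _ (by omega)
      omega
    | succ s ih =>
      intro i h1 h2 h3
      have hIH := ih (i + 1) (by omega) (by omega) (by omega)
      obtain ⟨a, ha⟩ : ∃ a, a + (r - 2) = i * k := by
        have h4 : 1 * k ≤ i * k := hmul 1 i h1
        exact ⟨i * k - (r - 2), by omega⟩
      have hiK : (i + 1) * k = i * k + k := by ring
      have h5 : (i + 1) * k ≤ r * k := hmul _ _ (by omega)
      have h4 : 1 * k ≤ i * k := hmul 1 i h1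
      obtain ⟨j, t, hj1, hj2, ht, hbj⟩ := hhit a 1 (by omega) (by omega) (by omega)
      have hj3 : bfun j ≤ j * k := hb2 j hj1 hj2
      have hj4 : (j - 1) * k + 1 ≤ bfun j := hb1 j hj1 hj2
      have hrange1 : a ≤ bfun j := by omega
      have hrange2 : bfun j + 1 ≤ a + k := by omega
      have hji : j = i := by
        by_contra hne
        rcases Nat.lt_or_ge j i with h | h
        · have h6 : j * k ≤ (i - 1) * k := hmul _ _ (by omega)
          have h7 := hsub1 i h1
          omega
        · rcases Nat.lt_or_ge (i + 1) j with h' | h'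
          · have h6 : (i + 1) * k ≤ (j - 1) * k := hmul _ _ (by omega)
            omega
          · have h6 : j = i + 1 := by omega
            rw [h6] at hrange2 hj3 hj4
            omega
      rw [hji] at hrange1
      omega
  -- P3 : gap bound
  have P3 : ∀ i, 1 ≤ i → i + 1 ≤ r - 1 → bfun (i + 1) ≤ bfun i + k := by
    intro i h1 h2
    have hb2i : bfun i ≤ i * k := hb2 i h1 (by omega)
    have hb1i : (i - 1) * k + 1 ≤ bfun i := hb1 i h1 (by omega)
    have hiK : (i + 1) * k = i * k + k := by ring
    have h5 : (i + 1) * k ≤ (r - 1) * k := hmul _ _ h2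
    have hr1 : (r - 1) * k + k = r * k := hsub1 r (by omega)
    obtain ⟨j, t, hj1, hj2, ht, hbj⟩ := hhit (bfun i + 1) 1 (by omega) (by omega) (by omega)
    have hj3 : bfun j ≤ j * k := hb2 j hj1 hj2
    have hj4 : (j - 1) * k + 1 ≤ bfun j := hb1 j hj1 hj2
    have hrange1 : bfun i + 1 ≤ bfun j := by omega
    have hrange2 : bfun j ≤ bfun i + k := by omega
    have hji : j = i + 1 := by
      by_contra hne
      rcases Nat.lt_or_ge j (i + 1) with h | h
      · -- j ≤ i : bfun j ≤ j*k ≤ i*k, but bfun j ≥ bfun i + 1 ≥ (i-1)k + 2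
        rcases Nat.lt_or_ge j i with h' | h'
        · have h6 : j * k ≤ (i - 1) * k := hmul _ _ (by omega)
          have h7 := hsub1 i h1
          omega
        · have h6 : j = i := by omega
          rw [h6] at hbj
          omega
      · -- j ≥ i + 2
        have h6 : (i + 1) * k ≤ (j - 1) * k := hmul _ _ (by omega)
        omega
    rw [hji] at hrange2
    exact hrange2
  -- P4 : upper exact bound (strong induction)
  have P4 : ∀ m, 1 ≤ m → m ≤ r - 1 → bfun m + m ≤ m * k + 1 := by
    intro m
    induction m using Nat.strong_induction_on with
    | _ m ih =>
      intro h1 h2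
      have hb2m : bfun m ≤ m * k := hb2 m h1 h2
      rcases Nat.eq_or_lt_of_le h1 with he | hm2
      · omega
      · by_contra hcontra
        push_neg at hcontra
        have hIH1 : bfun (m - 1) + (m - 1) ≤ (m - 1) * k + 1 :=
          ih (m - 1) (by omega) (by omega) (by omega)
        have hP3 : bfun (m - 1 + 1) ≤ bfun (m - 1) + k := P3 (m - 1) (by omega) (by omega)
        have hm1 : m - 1 + 1 = m := by omega
        rw [hm1] at hP3
        have hsm := hsub1 m (by omega)
        have hbm : bfun m + m = m * k + 2 := by omega
        have hbm1 : bfun (m - 1) + m = (m - 1) * k + 2 := by omega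
        have hc2 : 2 * k ≤ m * k := hmul 2 m (by omega)
        have h7 : (m - 2) * k = m * k - 2 * k := Nat.sub_mul m 2 k
        have h6 : m - 2 ≤ (m - 2) * k := Nat.le_mul_of_pos_right _ (by omega)
        obtain ⟨a, ha⟩ : ∃ a, a + 2 * k = bfun m + 3 := ⟨bfun m + 3 - 2 * k, by omega⟩
        have ha1 : 1 ≤ a := by omega
        have haN : a + (k - 1) * 2 ≤ N := by
          have h8 : (m + 1) * k ≤ r * k := hmul _ _ (by omega)
          have h9 : (m + 1) * k = m * k + k := by ring
          omega
        obtain ⟨j, t, hj1, hj2, ht, hbj⟩ := hhit a 2 ha1 (by omega) haN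
        have hj3 : bfun j ≤ j * k := hb2 j hj1 hj2
        have hj4 : (j - 1) * k + 1 ≤ bfun j := hb1 j hj1 hj2
        have hjP2 : j * k ≤ bfun j + (r - 2) := P2 (r - 1 - j) j hj1 hj2 (by omega)
        have hrange1 : a ≤ bfun j := by omega
        have hrange2 : bfun j ≤ a + (k - 1) * 2 := by
          have h10 : t * 2 ≤ (k - 1) * 2 := Nat.mul_le_mul_right 2 (by omega)
          omega
        have hcases : j + 3 ≤ m ∨ j + 2 = m ∨ j + 1 = m ∨ j = m ∨ m + 1 ≤ j := by omega
        rcases hcases with h | h | h | h | h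
        · have h11 : (j + 3) * k ≤ m * k := hmul _ _ h
          have h12 : (j + 3) * k = j * k + 3 * k := by ring
          omega
        · have hIHj : bfun j + j ≤ j * k + 1 := ih j (by omega) (by omega) (by omega)
          have h12 : m * k = j * k + 2 * k := by rw [← h]; ring
          omega
        · have h12 : m * k = j * k + k := by rw [← h]; ring
          have h13 : bfun j + m = j * k + 2 := by
            have h14 : m - 1 = j := by omega
            rw [h14] at hbm1
            exact hbm1
          omega
        · rw [h] at hbj
          omega
        · have h11 : (m + 1) * k ≤ j * k := hmul _ _ h
          have h9 : (m + 1) * k = m * k + k := by ring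
          omega
  -- P5 : lower exact bound (downward strong induction)
  have P5 : ∀ s m, 1 ≤ m → m ≤ r - 1 → m + s = r - 1 → m * k + 1 ≤ bfun m + m := by
    intro s
    induction s using Nat.strong_induction_on with
    | _ s ihs =>
      intro m h1 h2 h3
      rcases Nat.eq_zero_or_pos s with hs0 | hs1
      · have := P2 0 m h1 h2 (by omega)
        omega
      · by_contra hcontra
        push_neg at hcontra
        have hIH1 : (m + 1) * k + 1 ≤ bfun (m + 1) + (m + 1) :=
          ihs (s - 1) (by omega) (m + 1) (by omega) (by omega) (by omega)
        have hP4m1 : bfun (m + 1) + (m + 1) ≤ (m + 1) * k + 1 := P4 (m + 1) (by omega) (by omega)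
        have hP3 : bfun (m + 1) ≤ bfun m + k := P3 m h1 (by omega)
        have h9 : (m + 1) * k = m * k + k := by ring
        have hbm : bfun m + m = m * k := by omega
        have hbm1 : bfun (m + 1) + m = (m + 1) * k := by omega
        have h6 : m * 3 ≤ m * k := Nat.mul_le_mul_left m (by omega)
        obtain ⟨a, ha⟩ : ∃ a, a + 1 = bfun m := ⟨bfun m - 1, by omega⟩
        have ha1 : 1 ≤ a := by omega
        have haN : a + (k - 1) * 2 ≤ N := by
          have hc : (m + 2) + (r - m - 2) = r := by omega
          have h10 : (m + 2) * k + (r - m - 2) * k = r * k := by rw [← add_mul, hc]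
          have h11 : r - m - 2 ≤ (r - m - 2) * k := Nat.le_mul_of_pos_right _ (by omega)
          have h12 : (m + 2) * k = m * k + 2 * k := by ring
          omega
        obtain ⟨j, t, hj1, hj2, ht, hbj⟩ := hhit a 2 ha1 (by omega) haN
        have hj3 : bfun j ≤ j * k := hb2 j hj1 hj2
        have hj4 : (j - 1) * k + 1 ≤ bfun j := hb1 j hj1 hj2
        have hrange1 : a ≤ bfun j := by omega
        have hrange2 : bfun j ≤ a + (k - 1) * 2 := by
          have h10 : t * 2 ≤ (k - 1) * 2 := Nat.mul_le_mul_right 2 (by omega)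
          omega
        have hcases : j + 1 ≤ m ∨ j = m ∨ j = m + 1 ∨ m + 2 ≤ j := by omega
        rcases hcases with h | h | h | h
        · have hP4j : bfun j + j ≤ j * k + 1 := P4 j hj1 hj2
          have h11 : (j + 1) * k ≤ m * k := hmul _ _ h
          have h12 : (j + 1) * k = j * k + k := by ring
          omega
        · rw [h] at hbj
          omega
        · have h12 : (m + 1) * k = m * k + k := by ring
          rw [h] at hbj
          omega
        · have hIHj : j * k + 1 ≤ bfun j + j :=
            ihs (r - 1 - j) (by omega) j (by omega) (by omega) (by omega)
          have hc : (m + 2) + (j - m - 2) = j := by omega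
          have h10 : (m + 2) * k + (j - m - 2) * k = j * k := by rw [← add_mul, hc]
          have h11 : j - m - 2 ≤ (j - m - 2) * k := Nat.le_mul_of_pos_right _ (by omega)
          have h12 : (m + 2) * k = m * k + 2 * k := by ring
          omega
  -- final contradiction with the difference-r progression
  have hfin : 1 + (k - 1) * r ≤ N := by
    have h1 : (k - 1) * r + r = k * r := by
      have h2 : k - 1 + 1 = k := by omega
      calc (k - 1) * r + r = (k - 1 + 1) * r := by ring
        _ = k * r := by rw [h2]
    have h3 : k * r = r * k := Nat.mul_comm _ _
    omega
  obtain ⟨j, t, hj1, hj2, ht, hbj⟩ := hhit 1 r (by omega) (by omega) hfin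
  have hP4j := P4 j hj1 hj2
  have hP5j := P5 (r - 1 - j) j hj1 hj2 (by omega)
  have hdvd : r ∣ j * (k - 1) := by
    have h4 : j * (k - 1) + j = j * k := by
      have h5 : (k - 1) + 1 = k := by omega
      calc j * (k - 1) + j = j * ((k - 1) + 1) := by ring
        _ = j * k := by rw [h5]
    have h6 : j * (k - 1) = r * t := by rw [Nat.mul_comm r t]; omega
    exact ⟨t, h6⟩
  have hrj : r ∣ j := (Nat.Coprime.dvd_of_dvd_mul_right hcopr) hdvd
  have := Nat.le_of_dvd (by omega) hrj
  omega

/-- Part II(i): if `j_{k,r} = 1`, then `w₂(k;r) = rk - r + 1`. -/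
theorem w2_eq_of_j_eq_one (k r : ℕ) (hr : 2 ≤ r) (hk : r < k)
    (hj : jkr k r = 1) :
    IsLeast {n : ℕ | 0 < n ∧ vdwProp r (twoColors k) n} (r * k - r + 1) := by
  have hSne : {j : ℕ | Nat.gcd (k - j) (primorialUpTo r) = 1}.Nonempty := by
    by_contra h
    rw [Set.not_nonempty_iff_eq_empty] at h
    rw [jkr, h, Nat.sInf_empty] at hj
    exact absurd hj (by norm_num)
  have h1 : Nat.gcd (k - 1) (primorialUpTo r) = 1 := by
    have hmem : jkr k r ∈ {j : ℕ | Nat.gcd (k - j) (primorialUpTo r) = 1} :=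
      Nat.sInf_mem hSne
    rw [hj] at hmem
    exact hmem
  constructor
  · simp only [Set.mem_setOf_eq]
    exact ⟨by omega, upper_bound k r hr hk (k_even_of_gcd_one hr hk h1)
      (cop_of_gcd_one hr hk h1 r (by omega) le_rfl)⟩
  · intro n hn
    simp only [Set.mem_setOf_eq] at hn
    by_contra hlt
    push_neg at hlt
    exact lower_bound k r hr hk (cop_of_gcd_one hr hk h1) n (by omega) hn.2
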